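/- The distributional estimate for the bilinear strong maximal function in ℝ² is sharp: taking f = χ_{[0,1]²} and g_N = N·χ_{[0,1]²}, one has |{x ∈ ℝ² : 𝓜_𝓡(f,g_N)(x) > 1/100}| ≥ c·√N·log N for large N, while ∫Φ₂(10|f|)dx · ∫Φ₂(10|g_N|)dx ≲ N·(log N)², so that the estimate with Φ₂^{(1)} = Φ₂ in place of Φ₂^{(2)} fails. -/

import Mathlib

open MeasureTheory
open scoped ENNReal

/-- An open axis-parallel rectangle in `ℝⁿ`. -/
def IsRect {n : ℕ} (R : Set (Fin n → ℝ)) : Prop :=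
  ∃ a b : Fin n → ℝ, (∀ i, a i < b i) ∧
    R = Set.univ.pi fun i => Set.Ioo (a i) (b i)

/-- The average of `|f|` over a set `R` (as an extended nonnegative real). -/
noncomputable def avgAbs {n : ℕ} (R : Set (Fin n → ℝ)) (f : (Fin n → ℝ) → ℝ) : ℝ≥0∞ :=
  (∫⁻ y in R, ENNReal.ofReal |f y|) / volume R

/-- The (linear) strong maximal function over axis-parallel rectangles. -/
noncomputable def strongMaximal {n : ℕ} (f : (Fin n → ℝ) → ℝ) (x : Fin n → ℝ) : ℝ≥0∞ :=
  ⨆ (R : Set (Fin n → ℝ)) (_ : IsRect R) (_ : x ∈ R), avgAbs R f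

/-- The multilinear strong maximal function over axis-parallel rectangles. -/
noncomputable def multiStrongMaximal {n m : ℕ} (f : Fin m → (Fin n → ℝ) → ℝ)
    (x : Fin n → ℝ) : ℝ≥0∞ :=
  ⨆ (R : Set (Fin n → ℝ)) (_ : IsRect R) (_ : x ∈ R), ∏ i, avgAbs R (f i)

/-- `Φ₂(t) = t log(e+t)`. -/
noncomputable def Phi2 (t : ℝ) : ℝ := t * Real.log (Real.exp 1 + t)

/-- The unit square in `ℝ²`. -/
def unitSquare : Set (Fin 2 → ℝ) := Set.univ.pi fun _ => Set.Icc (0:ℝ) 1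

/- ### Auxiliary lemmas -/

lemma meas_unitSquare : MeasurableSet unitSquare :=
  MeasurableSet.univ_pi fun _ => measurableSet_Icc

lemma vol_unitSquare : volume unitSquare = 1 := by
  rw [unitSquare, volume_pi_pi]
  simp [Real.volume_Icc]

lemma Phi2_zero : Phi2 0 = 0 := by simp [Phi2]

lemma lint_Phi2 (c : ℝ) (hc : 0 ≤ c) :
    (∫⁻ x, ENNReal.ofReal (Phi2 (10 * |Set.indicator unitSquare (fun _ => c) x|))) =
      ENNReal.ofReal (Phi2 (10 * c)) := by
  have h : ∀ x, ENNReal.ofReal (Phi2 (10 * |Set.indicator unitSquare (fun _ => c) x|)) =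
      Set.indicator unitSquare (fun _ => ENNReal.ofReal (Phi2 (10 * c))) x := by
    intro x
    by_cases hx : x ∈ unitSquare
    · simp [Set.indicator_of_mem hx, abs_of_nonneg hc]
    · simp [Set.indicator_of_notMem hx, Phi2_zero]
  simp_rw [h]
  rw [lintegral_indicator meas_unitSquare, setLIntegral_const, vol_unitSquare, mul_one]

lemma avg_rect (b : Fin 2 → ℝ) (hb : ∀ i, 1 < b i) (c : ℝ) (hc : 0 ≤ c) :
    avgAbs (Set.univ.pi fun i => Set.Ioo 0 (b i)) (Set.indicator unitSquare fun _ => c)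
      = ENNReal.ofReal (c / (b 0 * b 1)) := by
  set R : Set (Fin 2 → ℝ) := Set.univ.pi fun i => Set.Ioo 0 (b i) with hR
  have habs : ∀ y, ENNReal.ofReal |Set.indicator unitSquare (fun _ => c) y| =
      Set.indicator unitSquare (fun _ => ENNReal.ofReal c) y := by
    intro y
    by_cases hy : y ∈ unitSquare
    · simp [Set.indicator_of_mem hy, abs_of_nonneg hc]
    · simp [Set.indicator_of_notMem hy]
  have hint : (∫⁻ y in R, ENNReal.ofReal |Set.indicator unitSquare (fun _ => c) y|) =
      ENNReal.ofReal c * volume (unitSquare ∩ R) := by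
    simp_rw [habs]
    rw [lintegral_indicator meas_unitSquare, setLIntegral_const,
      Measure.restrict_apply meas_unitSquare]
  have hSR : unitSquare ∩ R = Set.univ.pi fun i => Set.Ioc (0:ℝ) 1 := by
    rw [unitSquare, hR, ← Set.pi_inter_distrib]
    refine Set.pi_congr rfl fun i _ => ?_
    ext t
    constructor
    · rintro ⟨⟨h1, h2⟩, h3, h4⟩; exact ⟨h3, h2⟩
    · rintro ⟨h1, h2⟩; exact ⟨⟨le_of_lt h1, h2⟩, h1, lt_of_le_of_lt h2 (hb i)⟩
  have hvSR : volume (unitSquare ∩ R) = 1 := by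
    rw [hSR, volume_pi_pi]; simp [Real.volume_Ioc]
  have hvR : volume R = ENNReal.ofReal (b 0 * b 1) := by
    rw [hR, volume_pi_pi]
    simp only [Real.volume_Ioo, sub_zero]
    rw [Fin.prod_univ_two, ← ENNReal.ofReal_mul (le_of_lt (lt_trans one_pos (hb 0)))]
  rw [avgAbs, hint, hvSR, mul_one, hvR,
    ENNReal.ofReal_div_of_pos (mul_pos (lt_trans one_pos (hb 0)) (lt_trans one_pos (hb 1)))]

lemma pointwise_bound (N : ℕ) (hN : 1 ≤ N) (x : Fin 2 → ℝ)
    (h0 : 1 < x 0) (h1 : 1 < x 1) (hx : x 0 * x 1 < 10 * Real.sqrt N) :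
    ENNReal.ofReal (1 / 100) <
      multiStrongMaximal
        ![Set.indicator unitSquare fun _ => (1:ℝ),
          Set.indicator unitSquare fun _ => (N:ℝ)] x := by
  set P : ℝ := x 0 * x 1 with hP
  set K : ℝ := 10 * Real.sqrt N with hK
  have hPpos : 0 < P := mul_pos (lt_trans one_pos h0) (lt_trans one_pos h1)
  set δ : ℝ := (P + K) / 2 with hδ
  have hPδ : P < δ := by simp only [hδ]; linarith
  have hδK : δ < K := by simp only [hδ]; linarith
  have hδpos : 0 < δ := lt_trans hPpos hPδ
  set t : ℝ := Real.sqrt (δ / P) with ht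
  have htgt : 1 < t := by
    rw [ht]
    rw [show (1:ℝ) = Real.sqrt 1 by simp]
    exact Real.sqrt_lt_sqrt one_pos.le ((one_lt_div hPpos).mpr hPδ)
  set b : Fin 2 → ℝ := fun i => x i * t with hb
  have hbx : ∀ i, x i < b i := by
    intro i
    have : 0 < x i := by fin_cases i <;> [exact lt_trans one_pos h0; exact lt_trans one_pos h1]
    calc x i = x i * 1 := (mul_one _).symm
    _ < x i * t := by exact (mul_lt_mul_iff_right₀ this).mpr htgt
  have hb1 : ∀ i, 1 < b i := by
    intro i
    have h1i : 1 < x i := by fin_cases i <;> assumption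
    exact lt_trans h1i (hbx i)
  have hbprod : b 0 * b 1 = δ := by
    have : b 0 * b 1 = P * t ^ 2 := by simp only [hb, hP]; ring
    rw [this, ht, Real.sq_sqrt (le_of_lt (div_pos hδpos hPpos))]
    field_simp
  set R : Set (Fin 2 → ℝ) := Set.univ.pi fun i => Set.Ioo 0 (b i) with hR
  have hRect : IsRect R := ⟨0, b, fun i => lt_trans one_pos (hb1 i), by simp [hR]⟩
  have hxR : x ∈ R := by
    intro i _
    refine ⟨?_, hbx i⟩
    fin_cases i <;> [exact lt_trans one_pos h0; exact lt_trans one_pos h1]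
  have hprod : (∏ i, avgAbs R (![Set.indicator unitSquare fun _ => (1:ℝ),
      Set.indicator unitSquare fun _ => (N:ℝ)] i)) = ENNReal.ofReal ((N : ℝ) / δ ^ 2) := by
    rw [Fin.prod_univ_two]
    simp only [Matrix.cons_val_zero, Matrix.cons_val_one, Matrix.head_cons]
    rw [hR, avg_rect b hb1 1 one_pos.le, avg_rect b hb1 N (Nat.cast_nonneg N), hbprod,
      ← ENNReal.ofReal_mul (by positivity)]
    congr 1
    rw [div_mul_div_comm, one_mul, ← sq]
  have hlt : ENNReal.ofReal (1 / 100) < ENNReal.ofReal ((N : ℝ) / δ ^ 2) := by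
    rw [ENNReal.ofReal_lt_ofReal_iff (by positivity)]
    have hNpos : (0:ℝ) < N := by exact_mod_cast hN
    rw [div_lt_div_iff₀ (by norm_num) (by positivity)]
    have hδ2 : δ ^ 2 < 100 * N := by
      have : δ ^ 2 < K ^ 2 := by
        apply pow_lt_pow_left₀ hδK hδpos.le
        norm_num
      have hK2 : K ^ 2 = 100 * N := by
        rw [hK, mul_pow, Real.sq_sqrt (Nat.cast_nonneg N)]
        norm_num
      linarith
    linarith
  refine lt_of_lt_of_le hlt ?_
  rw [← hprod, multiStrongMaximal]
  exact le_iSup_of_le R (le_iSup_of_le hRect (le_iSup_of_le hxR le_rfl))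

lemma integral_piece (K : ℝ) (hK : 2 < K) :
    ∫ y in Set.Ioo (1:ℝ) (K/2), (K/(2*y) - 1) =
      K/2 * Real.log (K/2) - (K/2 - 1) := by
  have h1K : (1:ℝ) ≤ K/2 := by linarith
  rw [← MeasureTheory.integral_Ioc_eq_integral_Ioo,
    ← intervalIntegral.integral_of_le h1K]
  have hg : ∀ y ∈ Set.uIcc (1:ℝ) (K/2), K/(2*y) = K/2 * y⁻¹ := by
    intro y hy; field_simp
  rw [intervalIntegral.integral_congr (g := fun y => K/2 * y⁻¹ - 1) (by
    intro y hy; simp only; rw [hg y hy])]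
  have hne : ∀ y ∈ Set.uIcc (1:ℝ) (K/2), y ≠ 0 := by
    intro y hy
    rw [Set.uIcc_of_le h1K] at hy
    exact ne_of_gt (lt_of_lt_of_le one_pos hy.1)
  have hint1 : IntervalIntegrable (fun y : ℝ => K/2 * y⁻¹) volume 1 (K/2) :=
    (intervalIntegral.intervalIntegrable_inv hne continuousOn_id).const_mul (K/2)
  have hint2 : IntervalIntegrable (fun _ : ℝ => (1:ℝ)) volume 1 (K/2) :=
    intervalIntegrable_const
  rw [intervalIntegral.integral_sub hint1 hint2, intervalIntegral.integral_const_mul,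
    integral_inv_of_pos one_pos (by linarith), intervalIntegral.integral_const]
  rw [div_one]
  ring_nf

lemma vol_lower (K : ℝ) (hK : 2 < K) :
    ENNReal.ofReal (K/2 * Real.log (K/2) - (K/2 - 1)) ≤
      volume {x : Fin 2 → ℝ | 1 < x 0 ∧ 1 < x 1 ∧ x 0 * x 1 < K} := by
  set g : ℝ → ℝ := fun a => K/(2*a) with hgdef
  set s : Set ℝ := Set.Ioo 1 (K/2) with hs
  set S : Set (ℝ × ℝ) := regionBetween (fun _ => (1:ℝ)) g s with hS
  have hgm : Measurable g := by
    apply Measurable.div measurable_const (measurable_id.const_mul 2)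
  have hSm : MeasurableSet S :=
    measurableSet_regionBetween measurable_const hgm measurableSet_Ioo
  have hfint : IntegrableOn (fun _ : ℝ => (1:ℝ)) s volume := by
    exact integrableOn_const (by rw [hs, Real.volume_Ioo]; exact ENNReal.ofReal_ne_top)
  have hgc : ContinuousOn g (Set.Icc 1 (K/2)) := by
    apply ContinuousOn.div continuousOn_const (continuousOn_const.mul continuousOn_id)
    intro a ha
    have := ha.1
    exact mul_ne_zero two_ne_zero (ne_of_gt (show (0:ℝ) < id a by simp only [id]; linarith))
  have hgint : IntegrableOn g s volume :=
    (hgc.integrableOn_Icc).mono_set Set.Ioo_subset_Icc_self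
  have hfg : ∀ a ∈ s, (fun _ : ℝ => (1:ℝ)) a ≤ g a := by
    intro a ha
    rw [hgdef]
    have ha1 : 1 < a := ha.1
    have ha2 : a < K/2 := ha.2
    rw [le_div_iff₀ (by linarith)]
    simp only [one_mul]
    linarith
  have hvol : (volume : Measure (ℝ × ℝ)) S =
      ENNReal.ofReal (K/2 * Real.log (K/2) - (K/2 - 1)) := by
    rw [MeasureTheory.Measure.volume_eq_prod,
      volume_regionBetween_eq_integral hfint hgint measurableSet_Ioo hfg]
    congr 1
    rw [← integral_piece K hK]
    apply MeasureTheory.setIntegral_congr_fun measurableSet_Ioo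
    intro y hy
    simp [hgdef, Pi.sub_apply]
  set e := MeasurableEquiv.piFinTwo (fun _ : Fin 2 => ℝ) with he
  have hpre : volume (e ⁻¹' S) = volume S :=
    (volume_preserving_piFinTwo (fun _ : Fin 2 => ℝ)).measure_preimage hSm.nullMeasurableSet
  have hsub : e ⁻¹' S ⊆ {x : Fin 2 → ℝ | 1 < x 0 ∧ 1 < x 1 ∧ x 0 * x 1 < K} := by
    intro x hx
    have hx' : (x 0, x 1) ∈ S := hx
    obtain ⟨ha, hb1, hb2⟩ := hx'
    refine ⟨ha.1, hb1, ?_⟩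
    have h0 : (0:ℝ) < x 0 := lt_trans one_pos ha.1
    calc x 0 * x 1 < x 0 * (K/(2 * x 0)) := by
          exact (mul_lt_mul_iff_right₀ h0).mpr hb2
    _ = K/2 := by field_simp
    _ < K := by linarith
  calc ENNReal.ofReal (K/2 * Real.log (K/2) - (K/2 - 1)) = volume (e ⁻¹' S) := by
        rw [hpre, hvol]
  _ ≤ _ := measure_mono hsub

lemma exp_one_lt_three : Real.exp 1 < 3 :=
  lt_trans Real.exp_one_lt_d9 (by norm_num)

lemma log_ge (N : ℕ) (hN : 100 ≤ N) : 10/3 ≤ Real.log N := by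
  have hNpos : (0:ℝ) < N := by positivity
  rw [Real.le_log_iff_exp_le hNpos]
  have h1 : Real.exp (10/3) ≤ Real.exp 4 := Real.exp_le_exp.mpr (by norm_num)
  have h2 : Real.exp 4 = (Real.exp 1)^4 := by
    rw [← Real.exp_nat_mul]; norm_num
  have h3 : (Real.exp 1)^4 ≤ 3^4 :=
    pow_le_pow_left₀ (Real.exp_pos 1).le exp_one_lt_three.le 4
  have h4 : (100:ℝ) ≤ N := by exact_mod_cast hN
  nlinarith

lemma Phi2_ten_nonneg : 0 ≤ Phi2 10 := by
  apply mul_nonneg (by norm_num)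
  apply Real.log_nonneg
  nlinarith [Real.exp_one_gt_d9]

lemma Phi2_ten_le : Phi2 10 ≤ 120 := by
  have h := Real.log_le_sub_one_of_pos (show (0:ℝ) < Real.exp 1 + 10 by positivity)
  have := exp_one_lt_three
  rw [Phi2]; nlinarith

lemma Phi2_tenN_le (N : ℕ) (hN : 100 ≤ N) :
    Phi2 (10 * N) ≤ 20 * N * Real.log N := by
  have hNpos : (0:ℝ) < N := by positivity
  have hN20 : (20:ℝ) ≤ N := by exact_mod_cast le_trans (by norm_num) hN
  have h1 : Real.log (Real.exp 1 + 10 * N) ≤ Real.log (20 * N) := by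
    apply Real.log_le_log (by positivity)
    nlinarith [exp_one_lt_three]
  have h2 : Real.log (20 * N) = Real.log 20 + Real.log N :=
    Real.log_mul (by norm_num) (ne_of_gt hNpos)
  have h3 : Real.log 20 ≤ Real.log N := Real.log_le_log (by norm_num) hN20
  rw [Phi2]
  nlinarith [Real.log_nonneg (show (1:ℝ) ≤ N by linarith)]

lemma Phi2_tenN_nonneg (N : ℕ) : 0 ≤ Phi2 (10 * N) := by
  apply mul_nonneg (by positivity)
  apply Real.log_nonneg
  nlinarith [Real.exp_one_gt_d9, Nat.cast_nonneg (α := ℝ) N]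

lemma sqrt_ge_ten (N : ℕ) (hN : 100 ≤ N) : 10 ≤ Real.sqrt N := by
  rw [show (10:ℝ) = Real.sqrt 100 by
    rw [show (100:ℝ) = 10^2 by norm_num, Real.sqrt_sq (by norm_num)]]
  exact Real.sqrt_le_sqrt (by exact_mod_cast hN)

lemma real_lower (N : ℕ) (hN : 100 ≤ N) :
    1 * Real.sqrt N * Real.log N ≤
      (10 * Real.sqrt N)/2 * Real.log ((10 * Real.sqrt N)/2) - ((10 * Real.sqrt N)/2 - 1) := by
  set s := Real.sqrt N with hs
  have hs10 : 10 ≤ s := sqrt_ge_ten N hN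
  have hL : 10/3 ≤ Real.log N := log_ge N hN
  have hlog5 : (0:ℝ) ≤ Real.log 5 := Real.log_nonneg (by norm_num)
  have h52 : (10 * s)/2 = 5 * s := by ring
  rw [h52]
  have hlogsplit : Real.log (5 * s) = Real.log 5 + Real.log N / 2 := by
    rw [Real.log_mul (by norm_num) (by nlinarith), hs, Real.log_sqrt (Nat.cast_nonneg N)]
  rw [hlogsplit]
  nlinarith [mul_nonneg (show (0:ℝ) ≤ s by linarith) hlog5,
    mul_nonneg (show (0:ℝ) ≤ s by linarith) (show (0:ℝ) ≤ Real.log N - 10/3 by linarith)]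

lemma key1 (N : ℕ) (hN : 100 ≤ N) :
    ENNReal.ofReal (1 * Real.sqrt N * Real.log N) ≤
      volume {x | ENNReal.ofReal (1 / 100) <
        multiStrongMaximal
          ![Set.indicator unitSquare fun _ => (1:ℝ),
            Set.indicator unitSquare fun _ => (N:ℝ)] x} := by
  have hK2 : 2 < 10 * Real.sqrt N := by linarith [sqrt_ge_ten N hN]
  refine le_trans (ENNReal.ofReal_le_ofReal (real_lower N hN)) ?_
  refine le_trans (vol_lower (10 * Real.sqrt N) hK2) (measure_mono ?_)
  rintro x ⟨h0, h1, hx⟩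
  exact pointwise_bound N (le_trans (by norm_num) hN) x h0 h1 hx

lemma Phi2_ten1_nonneg : 0 ≤ Phi2 (10 * 1) := by
  rw [mul_one]; exact Phi2_ten_nonneg

lemma prod_bound (N : ℕ) (hN : 100 ≤ N) :
    Phi2 (10 * 1) * Phi2 (10 * N) ≤ 2400 * N * Real.log N := by
  rw [mul_one]
  have h1 := Phi2_ten_le
  have h2 := Phi2_ten_nonneg
  have h3 := Phi2_tenN_le N hN
  have h4 := Phi2_tenN_nonneg N
  have h5 : (0:ℝ) ≤ 20 * N * Real.log N := by
    have := log_ge N hN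
    positivity
  nlinarith

/-- Sharpness of the bilinear endpoint estimate in `ℝ²`: for `f = χ_{[0,1]²}` and
`g_N = N χ_{[0,1]²}`, the level set `{𝓜_𝓡(f,g_N) > 1/100}` has measure at least
`c √N log N`, while `∫Φ₂(10|f|) ∫Φ₂(10|g_N|) ≲ N (log N)²`; consequently the
distributional estimate with `Φ₂` in place of `Φ₂^{(2)}` fails. -/
theorem bilinear_endpoint_sharp :
    (∃ c : ℝ, 0 < c ∧ ∃ N₀ : ℕ, ∀ N : ℕ, N₀ ≤ N →
      ENNReal.ofReal (c * Real.sqrt N * Real.log N) ≤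
        volume {x | ENNReal.ofReal (1 / 100) <
          multiStrongMaximal
            ![Set.indicator unitSquare fun _ => (1:ℝ),
              Set.indicator unitSquare fun _ => (N:ℝ)] x}) ∧
    (∃ C : ℝ, 0 < C ∧ ∃ N₀ : ℕ, ∀ N : ℕ, N₀ ≤ N →
      (∫⁻ x, ENNReal.ofReal (Phi2 (10 * |Set.indicator unitSquare (fun _ => (1:ℝ)) x|))) *
        (∫⁻ x, ENNReal.ofReal (Phi2 (10 * |Set.indicator unitSquare (fun _ => (N:ℝ)) x|))) ≤
        ENNReal.ofReal (C * N * (Real.log N) ^ 2)) ∧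
    ¬ ∃ C : ℝ, 0 < C ∧ ∀ (f g : (Fin 2 → ℝ) → ℝ), Measurable f → Measurable g →
        ∀ α : ℝ, 0 < α →
        volume {x | ENNReal.ofReal (α ^ 2) < multiStrongMaximal ![f, g] x} ≤
          ENNReal.ofReal C *
            ((∫⁻ x, ENNReal.ofReal (Phi2 (|f x| / α))) *
              (∫⁻ x, ENNReal.ofReal (Phi2 (|g x| / α)))) ^ (1 / (2:ℝ)) := by
  refine ⟨⟨1, one_pos, 100, fun N hN => key1 N hN⟩, ?_, ?_⟩
  · -- second part
    refine ⟨10000, by norm_num, 100, fun N hN => ?_⟩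
    rw [lint_Phi2 1 one_pos.le, lint_Phi2 N (Nat.cast_nonneg N),
      ← ENNReal.ofReal_mul Phi2_ten1_nonneg]
    apply ENNReal.ofReal_le_ofReal
    have h1 := prod_bound N hN
    have hL : 10/3 ≤ Real.log N := log_ge N hN
    have hN0 : (0:ℝ) ≤ N := Nat.cast_nonneg N
    nlinarith [mul_nonneg hN0 (show (0:ℝ) ≤ Real.log N by linarith),
      mul_nonneg (mul_nonneg hN0 (show (0:ℝ) ≤ Real.log N by linarith))
        (show (0:ℝ) ≤ Real.log N - 1 by linarith)]
  · -- third part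
    rintro ⟨C, hC, h⟩
    set f : (Fin 2 → ℝ) → ℝ := Set.indicator unitSquare fun _ => (1:ℝ) with hf
    set N : ℕ := 100 + ⌈Real.exp (2500 * C^2 + 1)⌉₊ with hNdef
    have hN100 : 100 ≤ N := Nat.le_add_right 100 _
    set g : (Fin 2 → ℝ) → ℝ := Set.indicator unitSquare fun _ => (N:ℝ) with hg
    have hfm : Measurable f := measurable_const.indicator meas_unitSquare
    have hgm : Measurable g := measurable_const.indicator meas_unitSquare
    have hle := h f g hfm hgm (1/10) (by norm_num)
    have harg : ∀ a : ℝ, a / (1/10:ℝ) = 10 * a := fun a => by ring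
    simp only [harg] at hle
    rw [show ((1/10:ℝ)^2) = 1/100 by norm_num] at hle
    rw [hf, hg, lint_Phi2 1 one_pos.le, lint_Phi2 N (Nat.cast_nonneg N)] at hle
    -- lower bound
    have hlow := key1 N hN100
    have hcomb := le_trans hlow hle
    -- bound the right-hand side
    have hL : 10/3 ≤ Real.log N := log_ge N hN100
    have hLpos : (0:ℝ) < Real.log N := by linarith
    have hNpos : (0:ℝ) < N := by positivity
    have hrhs : ENNReal.ofReal C *
        (ENNReal.ofReal (Phi2 (10 * 1)) * ENNReal.ofReal (Phi2 (10 * N))) ^ (1/(2:ℝ)) ≤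
        ENNReal.ofReal (C * (2400 * N * Real.log N) ^ (1/(2:ℝ))) := by
      rw [← ENNReal.ofReal_mul Phi2_ten1_nonneg]
      have h1 : ENNReal.ofReal (Phi2 (10 * 1) * Phi2 (10 * N)) ^ (1/(2:ℝ)) ≤
          ENNReal.ofReal (2400 * N * Real.log N) ^ (1/(2:ℝ)) :=
        ENNReal.rpow_le_rpow (ENNReal.ofReal_le_ofReal (prod_bound N hN100)) (by norm_num)
      have h2 : ENNReal.ofReal (2400 * N * Real.log N) ^ (1/(2:ℝ)) =
          ENNReal.ofReal ((2400 * N * Real.log N) ^ (1/(2:ℝ))) :=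
        ENNReal.ofReal_rpow_of_nonneg (by positivity) (by norm_num)
      calc _ ≤ ENNReal.ofReal C * ENNReal.ofReal ((2400 * N * Real.log N) ^ (1/(2:ℝ)))
          := mul_le_mul_right (h2 ▸ h1) _
        _ = _ := by rw [← ENNReal.ofReal_mul hC.le]
    have hfinal := le_trans hcomb hrhs
    rw [ENNReal.ofReal_le_ofReal_iff (by positivity)] at hfinal
    -- now extract real contradiction
    set s := Real.sqrt N with hsq
    set L := Real.log N with hLdef
    have hs10 : 10 ≤ s := sqrt_ge_ten N hN100
    have hrw : (2400 * N * L) ^ (1/(2:ℝ)) = Real.sqrt (2400 * N * L) :=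
      (Real.sqrt_eq_rpow _).symm
    rw [hrw] at hfinal
    have hsplit : Real.sqrt (2400 * N * L) ≤ 50 * s * Real.sqrt L := by
      have h1 : Real.sqrt (2400 * N * L) = Real.sqrt 2400 * s * Real.sqrt L := by
        rw [show (2400 * (N:ℝ) * L) = 2400 * ((N:ℝ) * L) by ring,
          Real.sqrt_mul (by norm_num), Real.sqrt_mul (Nat.cast_nonneg N), hsq]
        ring
      rw [h1]
      have h2 : Real.sqrt 2400 ≤ 50 := by
        rw [show (50:ℝ) = Real.sqrt (50^2) by rw [Real.sqrt_sq]; norm_num]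
        exact Real.sqrt_le_sqrt (by norm_num)
      have h3 : 0 ≤ s * Real.sqrt L := mul_nonneg (by linarith) (Real.sqrt_nonneg L)
      nlinarith [Real.sqrt_nonneg (2400:ℝ)]
    have hineq : s * L ≤ C * (50 * s * Real.sqrt L) := by
      calc s * L = 1 * s * L := by ring
      _ ≤ C * Real.sqrt (2400 * N * L) := hfinal
      _ ≤ C * (50 * s * Real.sqrt L) := by
          exact mul_le_mul_of_nonneg_left hsplit hC.le
    -- log N is large
    have hLbig : 2500 * C^2 < L := by
      rw [hLdef, show (2500 * C^2 : ℝ) = (2500 * C^2 + 1) - 1 by ring]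
      have hexp : Real.exp (2500 * C^2 + 1) ≤ N := by
        calc Real.exp (2500 * C^2 + 1) ≤ (⌈Real.exp (2500 * C^2 + 1)⌉₊ : ℝ) := Nat.le_ceil _
        _ ≤ N := by rw [hNdef]; push_cast; linarith
      have := Real.le_log_iff_exp_le hNpos |>.mpr hexp
      linarith
    have ha := Real.sq_sqrt hLpos.le
    have ha0 := Real.sqrt_nonneg L
    have ha50 : 50 * C < Real.sqrt L := by nlinarith
    nlinarith [mul_pos (mul_pos (show (0:ℝ) < s by linarith)
      (show (0:ℝ) < Real.sqrt L by nlinarith)) (show (0:ℝ) < Real.sqrt L - 50 * C by linarith)]
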